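/- Let M be a model of a complete first-order theory T, let n ≥ 1, and let A ⊆ M^n be an H-free set which is definable without parameters by a formula φ(x₁,…,xₙ), and such that any two distinct tuples of A have no common coordinates. Then φ isolates a complete n-type over ∅: for every formula ψ(x₁,…,xₙ) without parameters, either M ⊨ ∀x̄(φ(x̄) → ψ(x̄)) or M ⊨ ∀x̄(φ(x̄) → ¬ψ(x̄)). -/

import Mathlib

open FirstOrder FirstOrder.Language Set

variable {L : Language} {M : Type*} [L.Structure M]

/-- The family of universes of elementary submodels. -/
def ESub (L : Language) (M : Type*) [L.Structure M] : Set (Set M) :=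
  {N | ∃ S : L.ElementarySubstructure M, (S : Set M) = N}

def IsHFree (L : Language) (M : Type*) [L.Structure M] {n : ℕ}
    (A : Set (Fin n → M)) : Prop :=
  A.Infinite ∧
    ∃ (k : ℕ) (φ : L.Formula (Fin n ⊕ Fin k)) (c : Fin k → M),
      A = {x | φ.Realize (Sum.elim x c)} ∧
      ∀ A' : Set (Fin n → M), A' ⊆ A → A'.Infinite →
        ∃ Z ∈ ESub L M, (∀ i, c i ∈ Z) ∧ A' = A ∩ {x | ∀ i, x i ∈ Z}

lemma exists_in_esub {n : ℕ} (S : L.ElementarySubstructure M) (ν : L.Formula (Fin n))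
    (h : ∃ x : Fin n → M, ν.Realize x) :
    ∃ x : Fin n → M, (∀ i, x i ∈ S) ∧ ν.Realize x := by
  classical
  set σ : L.Sentence := (ν.relabel (Sum.inr : Fin n → Empty ⊕ Fin n)).iExs (Fin n) with hσ
  have hMσ : M ⊨ σ := by
    rw [hσ, Sentence.Realize, Formula.realize_iExs]
    simp only [Formula.realize_relabel, Sum.elim_comp_inr]
    obtain ⟨x, hx⟩ := h
    exact ⟨x, hx⟩
  have hSσ : Sentence.Realize (M := S) σ := (S.realize_sentence σ).2 hMσ
  rw [hσ, Sentence.Realize, Formula.realize_iExs] at hSσ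
  simp only [Formula.realize_relabel, Sum.elim_comp_inr] at hSσ
  obtain ⟨x, hx⟩ := hSσ
  refine ⟨fun i => (x i : M), fun i => (x i).2, ?_⟩
  exact (S.isElementary ν x).2 hx

theorem stmt1 (T : L.Theory) (hT : T.IsComplete) (hM : M ⊨ T)
    {n : ℕ} (hn : 1 ≤ n) (A : Set (Fin n → M)) (hA : IsHFree L M A)
    (φ : L.Formula (Fin n)) (hAdef : A = {x | φ.Realize x})
    (hcoord : ∀ x ∈ A, ∀ y ∈ A, x ≠ y → ∀ i j, x i ≠ y j) :
    ∀ ψ : L.Formula (Fin n),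
      (∀ x : Fin n → M, φ.Realize x → ψ.Realize x) ∨
      (∀ x : Fin n → M, φ.Realize x → ¬ ψ.Realize x) := by
  intro ψ
  by_contra h
  push_neg at h
  obtain ⟨⟨a, hφa, hψa⟩, b, hφb, hψb⟩ := h
  obtain ⟨hAinf, k, φ', c, hdef', hfree⟩ := hA
  set Ap : Set (Fin n → M) := A ∩ {x | ψ.Realize x} with hAp
  set An : Set (Fin n → M) := A ∩ {x | ¬ ψ.Realize x} with hAn
  have hunion : A = Ap ∪ An := by
    ext x; by_cases hx : ψ.Realize x <;> simp [hAp, hAn, hx]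
  have hinf : Ap.Infinite ∨ An.Infinite := by
    rw [← Set.infinite_union, ← hunion]; exact hAinf
  rcases hinf with hinf | hinf
  · obtain ⟨Z, ⟨S, rfl⟩, hc, hEq⟩ := hfree Ap Set.inter_subset_left hinf
    obtain ⟨x, hxZ, hx⟩ := exists_in_esub S (φ ⊓ ψ.not)
      ⟨a, by simp [Formula.realize_inf, Formula.realize_not, hφa, hψa]⟩
    rw [Formula.realize_inf, Formula.realize_not] at hx
    have hxA : x ∈ A := by rw [hAdef]; exact hx.1
    have : x ∈ Ap := by rw [hEq]; exact ⟨hxA, hxZ⟩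
    exact hx.2 this.2
  · obtain ⟨Z, ⟨S, rfl⟩, hc, hEq⟩ := hfree An Set.inter_subset_left hinf
    obtain ⟨x, hxZ, hx⟩ := exists_in_esub S (φ ⊓ ψ)
      ⟨b, by simp [Formula.realize_inf, hφb, hψb]⟩
    rw [Formula.realize_inf] at hx
    have hxA : x ∈ A := by rw [hAdef]; exact hx.1
    have : x ∈ An := by rw [hEq]; exact ⟨hxA, hxZ⟩
    exact this.2 hx.2
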